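/- Let 𝒞 be a small left skew-monoidal category. On the functor category [𝒞^op, Set] define the convolution tensor product (M∗N)C = ∫^{A,B} 𝒞(C,A⊗B) × MA × NB (a coend in Set) and the unit JC = 𝒞(C,I). Then: (i) there is a left skew-monoidal structure on [𝒞^op,Set] with tensor ∗ and unit J; (ii) the Yoneda embedding y : 𝒞 → [𝒞^op,Set] is strong monoidal for this structure, i.e. there are natural isomorphisms y(A⊗B) ≅ yA ∗ yB and yI ≅ J compatible with the associativity and unit constraints; and (iii) the structure is left closed: each functor -∗N has a right adjoint [N,-] given by [N,K]A = ∫_{B,C} [𝒞(C,A⊗B)×NB, KC] (an end in Set, square brackets denoting function sets). -/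

import Mathlib

open CategoryTheory

universe v u w

/-- A left skew-closed category structure on a category `V` (Street, "Skew-closed categories"). -/
structure SkewClosedStruct (V : Type u) [Category.{v} V] where
  ihom : V → V → V
  imap : ∀ {A A' B B' : V}, (A' ⟶ A) → (B ⟶ B') → (ihom A B ⟶ ihom A' B')
  imap_id : ∀ (A B : V), imap (𝟙 A) (𝟙 B) = 𝟙 (ihom A B)
  imap_comp : ∀ {A A' A'' B B' B'' : V} (f : A' ⟶ A) (f' : A'' ⟶ A') (g : B ⟶ B') (g' : B' ⟶ B''),
      imap (f' ≫ f) (g ≫ g') = imap f g ≫ imap f' g'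
  unit : V
  i : ∀ A : V, ihom unit A ⟶ A
  i_natural : ∀ {A B : V} (f : A ⟶ B), imap (𝟙 unit) f ≫ i B = i A ≫ f
  j : ∀ A : V, unit ⟶ ihom A A
  j_natural : ∀ {A B : V} (f : A ⟶ B), j A ≫ imap (𝟙 A) f = j B ≫ imap f (𝟙 B)
  L : ∀ A B C : V, ihom B C ⟶ ihom (ihom A B) (ihom A C)
  L_natural : ∀ {B B' C C' : V} (A : V) (f : B' ⟶ B) (g : C ⟶ C'),
      imap f g ≫ L A B' C' = L A B C ≫ imap (imap (𝟙 A) f) (imap (𝟙 A) g)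
  L_extranatural : ∀ {A A' : V} (h : A' ⟶ A) (B C : V),
      L A B C ≫ imap (𝟙 (ihom A B)) (imap h (𝟙 C))
        = L A' B C ≫ imap (imap h (𝟙 B)) (𝟙 (ihom A' C))
  SCC1 : ∀ A B C D : V,
      L A C D ≫ L (ihom A B) (ihom A C) (ihom A D) ≫
          imap (L A B C) (𝟙 (ihom (ihom A B) (ihom A D)))
        = L B C D ≫ imap (𝟙 (ihom B C)) (L A B D)
  SCC2 : ∀ A C : V, L A A C ≫ imap (j A) (𝟙 (ihom A C)) ≫ i (ihom A C) = 𝟙 (ihom A C)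
  SCC3 : ∀ A B : V, j B ≫ L A B B = j (ihom A B)
  SCC4 : ∀ B C : V, L unit B C ≫ imap (𝟙 (ihom unit B)) (i C) = imap (i B) (𝟙 C)
  SCC5 : j unit ≫ i unit = 𝟙 unit

/-- A left skew-monoidal structure on a category `C` (Szlachányi; Street,
"Skew-closed categories", §7). -/
structure SkewMonoidalStruct (C : Type u) [Category.{v} C] where
  ten : C → C → C
  tmap : ∀ {A A' B B' : C}, (A ⟶ A') → (B ⟶ B') → (ten A B ⟶ ten A' B')
  tmap_id : ∀ (A B : C), tmap (𝟙 A) (𝟙 B) = 𝟙 (ten A B)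
  tmap_comp : ∀ {A A' A'' B B' B'' : C} (f : A ⟶ A') (f' : A' ⟶ A'') (g : B ⟶ B')
      (g' : B' ⟶ B''), tmap (f ≫ f') (g ≫ g') = tmap f g ≫ tmap f' g'
  unit : C
  a : ∀ A B C' : C, ten (ten A B) C' ⟶ ten A (ten B C')
  a_natural : ∀ {A A' B B' C₁ C₁' : C} (f : A ⟶ A') (g : B ⟶ B') (h : C₁ ⟶ C₁'),
      tmap (tmap f g) h ≫ a A' B' C₁' = a A B C₁ ≫ tmap f (tmap g h)
  l : ∀ A : C, ten unit A ⟶ A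
  l_natural : ∀ {A B : C} (f : A ⟶ B), tmap (𝟙 unit) f ≫ l B = l A ≫ f
  r : ∀ A : C, A ⟶ ten A unit
  r_natural : ∀ {A B : C} (f : A ⟶ B), f ≫ r B = r A ≫ tmap f (𝟙 unit)
  M1 : ∀ A B C₁ D : C,
      tmap (a A B C₁) (𝟙 D) ≫ a A (ten B C₁) D ≫ tmap (𝟙 A) (a B C₁ D)
        = a (ten A B) C₁ D ≫ a A B (ten C₁ D)
  M2 : ∀ A B : C, tmap (r A) (𝟙 B) ≫ a A unit B ≫ tmap (𝟙 A) (l B) = 𝟙 (ten A B)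
  M3 : ∀ A B : C, a unit A B ≫ l (ten A B) = tmap (l A) (𝟙 B)
  M4 : ∀ A B : C, r (ten A B) ≫ a A B unit = tmap (𝟙 A) (r B)
  M5 : r unit ≫ l unit = 𝟙 unit

section DayConvolution

open Opposite

variable {𝒞 : Type u} [Category.{u} 𝒞] (Cm : SkewMonoidalStruct 𝒞)

/-- Index data for the coend `(M∗N)C = ∫^{A,B} 𝒞(C, A⊗B) × MA × NB`. -/
def ConvIx (M N : 𝒞ᵒᵖ ⥤ Type u) (C : 𝒞) : Type u :=
  Σ A B : 𝒞, (C ⟶ Cm.ten A B) × M.obj (op A) × N.obj (op B)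

/-- The coend identifications for `(M∗N)C`. -/
def ConvRel (M N : 𝒞ᵒᵖ ⥤ Type u) (C : 𝒞) :
    ConvIx Cm M N C → ConvIx Cm M N C → Prop := fun x y =>
  ∃ (f : x.1 ⟶ y.1) (g : x.2.1 ⟶ y.2.1),
    y.2.2.1 = x.2.2.1 ≫ Cm.tmap f g ∧
    x.2.2.2.1 = M.map f.op y.2.2.2.1 ∧
    x.2.2.2.2 = N.map g.op y.2.2.2.2

/-- The convolution tensor product `(M∗N)C = ∫^{A,B} 𝒞(C, A⊗B) × MA × NB`. -/
def Conv (M N : 𝒞ᵒᵖ ⥤ Type u) : 𝒞ᵒᵖ ⥤ Type u where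
  obj C := Quot (ConvRel Cm M N C.unop)
  map {C D} φ := TypeCat.ofHom <| Quot.map
    (fun x => ⟨x.1, x.2.1, φ.unop ≫ x.2.2.1, x.2.2.2⟩)
    (by rintro ⟨A, B, h, m, n⟩ ⟨A', B', h', m', n'⟩ ⟨f, g, e1, e2, e3⟩
        dsimp only at e1 e2 e3 ⊢
        exact ⟨f, g, by rw [e1, Category.assoc], e2, e3⟩)
  map_id C := by
    ext q
    induction q using Quot.ind with
    | _ x =>
      obtain ⟨A, B, h, m, n⟩ := x
      exact congrArg (Quot.mk _) (by simp; rfl)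
  map_comp {C D E'} φ ψ := by
    ext q
    induction q using Quot.ind with
    | _ x =>
      obtain ⟨A, B, h, m, n⟩ := x
      exact congrArg (Quot.mk _) (by simp; rfl)

/-- Functoriality of the convolution product in both arguments. -/
def ConvMap {M M' N N' : 𝒞ᵒᵖ ⥤ Type u} (α : M ⟶ M') (β : N ⟶ N') :
    _root_.Conv Cm M N ⟶ _root_.Conv Cm M' N' where
  app C := TypeCat.ofHom <| Quot.map
    (fun x => ⟨x.1, x.2.1, x.2.2.1, α.app (op x.1) x.2.2.2.1, β.app (op x.2.1) x.2.2.2.2⟩)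
    (by rintro ⟨A, B, h, m, n⟩ ⟨A', B', h', m', n'⟩ ⟨f, g, e1, e2, e3⟩
        dsimp only at e1 e2 e3 ⊢
        refine ⟨f, g, e1, ?_, ?_⟩
        · rw [e2]; exact (NatTrans.naturality_apply α f.op m')
        · rw [e3]; exact (NatTrans.naturality_apply β g.op n'))
  naturality {C D} φ := by
    ext q
    induction q using Quot.ind with
    | _ x => rfl

/-- The functor `- ∗ N`. -/
def ConvLeft (N : 𝒞ᵒᵖ ⥤ Type u) : (𝒞ᵒᵖ ⥤ Type u) ⥤ (𝒞ᵒᵖ ⥤ Type u) where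
  obj M := _root_.Conv Cm M N
  map α := ConvMap Cm α (𝟙 N)
  map_id M := by
    ext C q
    induction q using Quot.ind with
    | _ x => rfl
  map_comp α β := by
    ext C q
    induction q using Quot.ind with
    | _ x => rfl

/-- The internal hom `[N,K]A = ∫_{B,C} [𝒞(C,A⊗B) × NB, KC]` of the convolution
structure. -/
def ConvHomObj (N K : 𝒞ᵒᵖ ⥤ Type u) : 𝒞ᵒᵖ ⥤ Type u where
  obj A := { x : ∀ (B C : 𝒞), (C ⟶ Cm.ten A.unop B) → N.obj (op B) → K.obj (op C) //
      (∀ (B C C' : 𝒞) (g : C' ⟶ C) (h : C ⟶ Cm.ten A.unop B) (n : N.obj (op B)),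
        x B C' (g ≫ h) n = K.map g.op (x B C h n)) ∧
      (∀ (B B' C : 𝒞) (f : B ⟶ B') (h : C ⟶ Cm.ten A.unop B) (n' : N.obj (op B')),
        x B' C (h ≫ Cm.tmap (𝟙 A.unop) f) n' = x B C h (N.map f.op n')) }
  map {A A'} u := TypeCat.ofHom fun x => ⟨fun B C h n => x.1 B C (h ≫ Cm.tmap u.unop (𝟙 B)) n, by
    constructor
    · intro B C C' g h n
      dsimp only
      rw [Category.assoc]
      exact x.2.1 B C C' g (h ≫ Cm.tmap u.unop (𝟙 B)) n
    · intro B B' C f h n'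
      dsimp only
      have key : (h ≫ Cm.tmap (𝟙 A'.unop) f) ≫ Cm.tmap u.unop (𝟙 B')
          = (h ≫ Cm.tmap u.unop (𝟙 B)) ≫ Cm.tmap (𝟙 A.unop) f := by
        rw [Category.assoc, Category.assoc, ← Cm.tmap_comp, ← Cm.tmap_comp]
        simp
      rw [key]
      exact x.2.2 B B' C f (h ≫ Cm.tmap u.unop (𝟙 B)) n'⟩
  map_id A := by
    ext x : 3
    apply Subtype.ext
    funext B C h n
    simp [Cm.tmap_id]
  map_comp {A A' A''} u v := by
    ext x : 3
    apply Subtype.ext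
    funext B C h n
    show x.1 B C (h ≫ Cm.tmap (u ≫ v).unop (𝟙 B)) n
        = x.1 B C ((h ≫ Cm.tmap v.unop (𝟙 B)) ≫ Cm.tmap u.unop (𝟙 B)) n
    rw [Category.assoc, ← Cm.tmap_comp]
    simp


section Aux

lemma tmapL {A A' A'' : 𝒞} (f : A ⟶ A') (f' : A' ⟶ A'') (B : 𝒞) :
    Cm.tmap (f ≫ f') (𝟙 B) = Cm.tmap f (𝟙 B) ≫ Cm.tmap f' (𝟙 B) := by
  simpa using Cm.tmap_comp f f' (𝟙 B) (𝟙 B)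

lemma tmapR (A : 𝒞) {B B' B'' : 𝒞} (g : B ⟶ B') (g' : B' ⟶ B'') :
    Cm.tmap (𝟙 A) (g ≫ g') = Cm.tmap (𝟙 A) g ≫ Cm.tmap (𝟙 A) g' := by
  simpa using Cm.tmap_comp (𝟙 A) (𝟙 A) g g'

lemma tmapLR {A A' B B' : 𝒞} (f : A ⟶ A') (g : B ⟶ B') :
    Cm.tmap f g = Cm.tmap f (𝟙 B) ≫ Cm.tmap (𝟙 A') g := by
  simpa using Cm.tmap_comp f (𝟙 A') (𝟙 B) g

lemma tmapRL {A A' B B' : 𝒞} (f : A ⟶ A') (g : B ⟶ B') :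
    Cm.tmap f g = Cm.tmap (𝟙 A) g ≫ Cm.tmap f (𝟙 B') := by
  simpa using Cm.tmap_comp (𝟙 A) f g (𝟙 B')

lemma conv_sound {M N : 𝒞ᵒᵖ ⥤ Type u} {C : 𝒞} {x y : ConvIx Cm M N C}
    (f : x.1 ⟶ y.1) (g : x.2.1 ⟶ y.2.1)
    (e1 : y.2.2.1 = x.2.2.1 ≫ Cm.tmap f g)
    (e2 : x.2.2.2.1 = M.map f.op y.2.2.2.1)
    (e3 : x.2.2.2.2 = N.map g.op y.2.2.2.2) :
    Quot.mk (ConvRel Cm M N C) x = Quot.mk _ y :=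
  Quot.sound ⟨f, g, e1, e2, e3⟩

lemma conv_map_mk {M N : 𝒞ᵒᵖ ⥤ Type u} {C D : 𝒞} (φ : D ⟶ C) (x : ConvIx Cm M N C) :
    (_root_.Conv Cm M N).map φ.op (Quot.mk _ x) = Quot.mk _ ⟨x.1, x.2.1, φ ≫ x.2.2.1, x.2.2.2⟩ := rfl

/-- Inner part of the associator. -/
def assocInner (P Q R : 𝒞ᵒᵖ ⥤ Type u) {C : 𝒞} (X B : 𝒞) (h : C ⟶ Cm.ten X B)
    (s : R.obj (Opposite.op B)) :
    (_root_.Conv Cm P Q).obj (Opposite.op X) → (_root_.Conv Cm P (_root_.Conv Cm Q R)).obj (Opposite.op C) :=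
  Quot.lift
    (fun y => Quot.mk _
      ⟨y.1, Cm.ten y.2.1 B,
        h ≫ Cm.tmap y.2.2.1 (𝟙 B) ≫ Cm.a y.1 y.2.1 B,
        y.2.2.2.1,
        Quot.mk _ ⟨y.2.1, B, 𝟙 _, y.2.2.2.2, s⟩⟩)
    (by
      rintro ⟨A, B', k, p, q⟩ ⟨A₂, B₂, k₂, p₂, q₂⟩ ⟨f, g, e1, e2, e3⟩
      dsimp only at f g e1 e2 e3 ⊢
      refine conv_sound Cm f (Cm.tmap g (𝟙 B)) ?_ e2 ?_
      · dsimp only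
        rw [e1]
        simp only [Category.assoc]
        slice_rhs 3 4 => rw [← Cm.a_natural f g (𝟙 B)]
        slice_rhs 2 3 => rw [← Cm.tmap_comp]
        simp
      · dsimp only
        refine conv_sound Cm g (𝟙 B) ?_ e3 (by simp)
        simp)

lemma assocInner_mk (P Q R : 𝒞ᵒᵖ ⥤ Type u) {C : 𝒞} (X B : 𝒞) (h : C ⟶ Cm.ten X B)
    (s : R.obj (Opposite.op B)) (y : ConvIx Cm P Q X) :
    assocInner Cm P Q R X B h s (Quot.mk _ y) = Quot.mk _
      ⟨y.1, Cm.ten y.2.1 B,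
        h ≫ Cm.tmap y.2.2.1 (𝟙 B) ≫ Cm.a y.1 y.2.1 B,
        y.2.2.2.1,
        Quot.mk _ ⟨y.2.1, B, 𝟙 _, y.2.2.2.2, s⟩⟩ := rfl

/-- The associator of the convolution product. -/
def ConvAssoc (P Q R : 𝒞ᵒᵖ ⥤ Type u) :
    _root_.Conv Cm (_root_.Conv Cm P Q) R ⟶ _root_.Conv Cm P (_root_.Conv Cm Q R) where
  app C := TypeCat.ofHom <| Quot.lift
    (fun x => assocInner Cm P Q R x.1 x.2.1 x.2.2.1 x.2.2.2.2 x.2.2.2.1)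
    (by
      rintro ⟨X, B, h, mq, rr⟩ ⟨X₂, B₂, h₂, mq₂, rr₂⟩ ⟨f, g, e1, e2, e3⟩
      dsimp only at f g e1 e2 e3 ⊢
      rw [e2, e3]
      induction mq₂ using Quot.ind with
      | _ y =>
        obtain ⟨A, B', k, p, q⟩ := y
        refine conv_sound Cm (𝟙 A) (Cm.tmap (𝟙 B') g) ?_ (by simp) ?_
        · dsimp only
          rw [e1]
          simp only [Category.assoc]
          slice_rhs 3 4 => rw [← Cm.a_natural (𝟙 A) (𝟙 B') g]
          rw [Cm.tmap_id]
          slice_lhs 2 3 => rw [← Cm.tmap_comp]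
          slice_rhs 2 3 => rw [← Cm.tmap_comp]
          simp
        · dsimp only
          refine conv_sound Cm (𝟙 B') g (by simp) (by simp) rfl)
  naturality {C D} φ := by
    ext x
    induction x using Quot.ind with
    | _ x =>
      obtain ⟨X, B, h, mq, rr⟩ := x
      induction mq using Quot.ind with
      | _ y =>
        obtain ⟨A, B', k, p, q⟩ := y
        exact congrArg (Quot.mk _) (by simp; rfl)

/-- The left unitor of the convolution product. -/
def ConvLUnitor (P : 𝒞ᵒᵖ ⥤ Type u) : _root_.Conv Cm (yoneda.obj Cm.unit) P ⟶ P where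
  app C := TypeCat.ofHom <| Quot.lift
    (fun x => P.map (x.2.2.1 ≫ Cm.tmap x.2.2.2.1 (𝟙 x.2.1) ≫ Cm.l x.2.1).op x.2.2.2.2)
    (by
      rintro ⟨A, B, h, u, p⟩ ⟨A₂, B₂, h₂, u₂, p₂⟩ ⟨f, g, e1, e2, e3⟩
      dsimp only at f g e1 e2 e3 ⊢
      have e2' : u = f ≫ u₂ := e2
      have key : (h ≫ Cm.tmap u (𝟙 B) ≫ Cm.l B) ≫ g = h₂ ≫ Cm.tmap u₂ (𝟙 B₂) ≫ Cm.l B₂ := by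
        rw [e1, e2']
        simp only [Category.assoc]
        slice_lhs 3 4 => rw [← Cm.l_natural g]
        slice_lhs 2 3 => rw [← Cm.tmap_comp]
        slice_rhs 2 3 => rw [← Cm.tmap_comp]
        simp
      rw [e3, ← FunctorToTypes.map_comp_apply, ← op_comp, key])
  naturality {C D} φ := by
    ext x
    induction x using Quot.ind with
    | _ x =>
      obtain ⟨A, B, h, u, p⟩ := x
      change P.map ((φ.unop ≫ h) ≫ Cm.tmap u (𝟙 B) ≫ Cm.l B).op p
        = P.map φ (P.map (h ≫ Cm.tmap u (𝟙 B) ≫ Cm.l B).op p)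
      rw [← FunctorToTypes.map_comp_apply]
      have : (h ≫ Cm.tmap u (𝟙 B) ≫ Cm.l B).op ≫ φ
          = ((φ.unop ≫ h) ≫ Cm.tmap u (𝟙 B) ≫ Cm.l B).op := by
        rw [← φ.op_unop, ← op_comp]
        congr 1
        simp
      rw [this]

/-- The right unitor of the convolution product. -/
def ConvRUnitor (P : 𝒞ᵒᵖ ⥤ Type u) : P ⟶ _root_.Conv Cm P (yoneda.obj Cm.unit) where
  app C := TypeCat.ofHom fun p => Quot.mk _ ⟨C.unop, Cm.unit, Cm.r C.unop, p, 𝟙 Cm.unit⟩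
  naturality {C D} φ := by
    ext p
    show Quot.mk _ _ = (_root_.Conv Cm P (yoneda.obj Cm.unit)).map φ (Quot.mk _ _)
    exact conv_sound Cm φ.unop (𝟙 Cm.unit)
      (by dsimp only; rw [Cm.r_natural φ.unop]) rfl (by simp)

/-- The Yoneda strong-monoidal comparison map. -/
def yMu (A B : 𝒞) :
    _root_.Conv Cm (yoneda.obj A) (yoneda.obj B) ≅ yoneda.obj (Cm.ten A B) where
  hom :=
    { app := fun C => TypeCat.ofHom <| Quot.lift (fun x => x.2.2.1 ≫ Cm.tmap x.2.2.2.1 x.2.2.2.2)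
        (by
          rintro ⟨X, Y, h, f0, g0⟩ ⟨X₂, Y₂, h₂, f₂, g₂⟩ ⟨f, g, e1, e2, e3⟩
          dsimp only at f g e1 e2 e3 ⊢
          have e2' : f0 = f ≫ f₂ := e2
          have e3' : g0 = g ≫ g₂ := e3
          rw [e1, e2', e3', Cm.tmap_comp]
          simp)
      naturality := by
        intro C D φ
        ext x
        induction x using Quot.ind with
        | _ x => exact Category.assoc _ _ _ }
  inv :=
    { app := fun C => TypeCat.ofHom fun h => Quot.mk _ ⟨A, B, h, 𝟙 A, 𝟙 B⟩
      naturality := fun C D φ => rfl }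
  hom_inv_id := by
    ext C x
    induction x using Quot.ind with
    | _ x =>
      obtain ⟨X, Y, h, f0, g0⟩ := x
      exact (Quot.sound ⟨f0, g0, rfl, (Category.comp_id f0).symm,
        (Category.comp_id g0).symm⟩).symm
  inv_hom_id := by
    ext C h
    show h ≫ Cm.tmap (𝟙 A) (𝟙 B) = h
    rw [Cm.tmap_id, Category.comp_id]

/-- The internal hom functor `[N,-]`. -/
def ConvHomFunctor (N : 𝒞ᵒᵖ ⥤ Type u) : (𝒞ᵒᵖ ⥤ Type u) ⥤ (𝒞ᵒᵖ ⥤ Type u) where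
  obj K := ConvHomObj Cm N K
  map {K K'} γ :=
    { app := fun A => TypeCat.ofHom fun x => ⟨fun B C h n => γ.app (Opposite.op C) (x.1 B C h n), by
        constructor
        · intro B C C' g h n
          dsimp only
          rw [x.2.1 B C C' g h n]
          exact NatTrans.naturality_apply γ g.op _
        · intro B B' C f h n'
          dsimp only
          rw [x.2.2 B B' C f h n']⟩
      naturality := by
        intro A A' u
        ext x
        exact Subtype.ext rfl }
  map_id K := by
    ext A x
    exact Subtype.ext rfl
  map_comp γ δ := by
    ext A x
    exact Subtype.ext rfl

/-- Currying for the convolution adjunction. -/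
def convCurry (N : 𝒞ᵒᵖ ⥤ Type u) {M K : 𝒞ᵒᵖ ⥤ Type u} (α : _root_.Conv Cm M N ⟶ K) :
    M ⟶ ConvHomObj Cm N K where
  app A := TypeCat.ofHom fun m => ⟨fun B C h n => α.app (Opposite.op C) (Quot.mk _ ⟨A.unop, B, h, m, n⟩), by
    constructor
    · intro B C C' g h n
      dsimp only
      have := NatTrans.naturality_apply α g.op
        (Quot.mk _ ⟨A.unop, B, h, m, n⟩)
      exact this
    · intro B B' C f h n'
      dsimp only
      exact (congrArg (α.app (Opposite.op C)) (Quot.sound ⟨𝟙 A.unop, f, rfl,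
        (FunctorToTypes.map_id_apply M m).symm, rfl⟩)).symm⟩
  naturality {A A'} u := by
    ext m
    apply Subtype.ext
    funext B C h n
    exact congrArg (α.app (Opposite.op C)) (Quot.sound ⟨u.unop, 𝟙 B, rfl, rfl,
      (FunctorToTypes.map_id_apply N n).symm⟩)

/-- Uncurrying for the convolution adjunction. -/
def convUncurry (N : 𝒞ᵒᵖ ⥤ Type u) {M K : 𝒞ᵒᵖ ⥤ Type u} (β : M ⟶ ConvHomObj Cm N K) :
    _root_.Conv Cm M N ⟶ K where
  app C := TypeCat.ofHom <| Quot.lift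
    (fun x => (β.app (Opposite.op x.1) x.2.2.2.1).1 x.2.1 C.unop x.2.2.1 x.2.2.2.2)
    (by
      rintro ⟨A, B, h, m, n⟩ ⟨A₂, B₂, h₂, m₂, n₂⟩ ⟨f, g, e1, e2, e3⟩
      dsimp only at f g e1 e2 e3 ⊢
      have hb := NatTrans.naturality_apply β f.op m₂
      calc (β.app (Opposite.op A) m).1 B C.unop h n
          = (β.app (Opposite.op A) (M.map f.op m₂)).1 B C.unop h n := by rw [← e2]
        _ = ((ConvHomObj Cm N K).map f.op (β.app (Opposite.op A₂) m₂)).1 B C.unop h n := by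
            exact congrArg (fun z => z.1 B C.unop h n) hb
        _ = (β.app (Opposite.op A₂) m₂).1 B C.unop (h ≫ Cm.tmap f (𝟙 B)) n := rfl
        _ = (β.app (Opposite.op A₂) m₂).1 B C.unop (h ≫ Cm.tmap f (𝟙 B)) (N.map g.op n₂) := by
            rw [← e3]
        _ = (β.app (Opposite.op A₂) m₂).1 B₂ C.unop
              ((h ≫ Cm.tmap f (𝟙 B)) ≫ Cm.tmap (𝟙 A₂) g) n₂ :=
            ((β.app (Opposite.op A₂) m₂).2.2 B B₂ C.unop g (h ≫ Cm.tmap f (𝟙 B)) n₂).symm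
        _ = (β.app (Opposite.op A₂) m₂).1 B₂ C.unop h₂ n₂ := by
            rw [e1, Category.assoc, ← tmapLR Cm f g])
  naturality {C D} φ := by
    ext q
    induction q using Quot.ind with
    | _ x =>
      obtain ⟨A, B, h, m, n⟩ := x
      exact (β.app (Opposite.op A) m).2.1 B C.unop D.unop φ.unop h n

/-- The convolution adjunction `- ∗ N ⊣ [N, -]`. -/
def convAdj (N : 𝒞ᵒᵖ ⥤ Type u) : ConvLeft Cm N ⊣ ConvHomFunctor Cm N :=
  Adjunction.mkOfHomEquiv
    { homEquiv := fun M K =>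
        { toFun := convCurry Cm N
          invFun := convUncurry Cm N
          left_inv := by
            intro α
            ext C q
            induction q using Quot.ind with
            | _ x => rfl
          right_inv := by
            intro β
            ext A m
            exact Subtype.ext rfl }
      homEquiv_naturality_left_symm := by
        intro M' M K f g
        ext C q
        induction q using Quot.ind with
        | _ x => rfl
      homEquiv_naturality_right := by
        intro M K K' f g
        ext A m
        exact Subtype.ext rfl }

end Aux

/-- (Street, "Skew-closed categories", §10.)
For a small left skew-monoidal category `𝒞`, the convolution tensor product
`(M∗N)C = ∫^{A,B} 𝒞(C,A⊗B) × MA × NB` with unit `J = 𝒞(-,I)` gives: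
(i) a left skew-monoidal structure on `[𝒞ᵒᵖ, Set]`;
(ii) the Yoneda embedding is strong monoidal for it (via isomorphisms
`yA ∗ yB ≅ y(A⊗B)` and `yI = J` compatible with the constraints); and
(iii) the structure is left closed: each `-∗N` has a right adjoint `[N,-]` with
`[N,K]A = ∫_{B,C} [𝒞(C,A⊗B) × NB, KC]`. -/
theorem day_convolution_skew_monoidal :
    ∃ (aC : ∀ P Q R : 𝒞ᵒᵖ ⥤ Type u,
        _root_.Conv Cm (_root_.Conv Cm P Q) R ⟶ _root_.Conv Cm P (_root_.Conv Cm Q R))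
      (lC : ∀ P : 𝒞ᵒᵖ ⥤ Type u, _root_.Conv Cm (yoneda.obj Cm.unit) P ⟶ P)
      (rC : ∀ P : 𝒞ᵒᵖ ⥤ Type u, P ⟶ _root_.Conv Cm P (yoneda.obj Cm.unit)),
      -- naturality of the constraints
      (∀ (P P' Q Q' R R' : 𝒞ᵒᵖ ⥤ Type u) (α : P ⟶ P') (β : Q ⟶ Q') (γ : R ⟶ R'),
        ConvMap Cm (ConvMap Cm α β) γ ≫ aC P' Q' R'
          = aC P Q R ≫ ConvMap Cm α (ConvMap Cm β γ)) ∧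
      (∀ (P P' : 𝒞ᵒᵖ ⥤ Type u) (α : P ⟶ P'),
        ConvMap Cm (𝟙 (yoneda.obj Cm.unit)) α ≫ lC P' = lC P ≫ α) ∧
      (∀ (P P' : 𝒞ᵒᵖ ⥤ Type u) (α : P ⟶ P'),
        α ≫ rC P' = rC P ≫ ConvMap Cm α (𝟙 (yoneda.obj Cm.unit))) ∧
      -- the five left skew-monoidal axioms
      (∀ P Q R S : 𝒞ᵒᵖ ⥤ Type u,
        ConvMap Cm (aC P Q R) (𝟙 S) ≫ aC P (_root_.Conv Cm Q R) S ≫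
            ConvMap Cm (𝟙 P) (aC Q R S)
          = aC (_root_.Conv Cm P Q) R S ≫ aC P Q (_root_.Conv Cm R S)) ∧
      (∀ P Q : 𝒞ᵒᵖ ⥤ Type u,
        ConvMap Cm (rC P) (𝟙 Q) ≫ aC P (yoneda.obj Cm.unit) Q ≫
            ConvMap Cm (𝟙 P) (lC Q)
          = 𝟙 (_root_.Conv Cm P Q)) ∧
      (∀ P Q : 𝒞ᵒᵖ ⥤ Type u,
        aC (yoneda.obj Cm.unit) P Q ≫ lC (_root_.Conv Cm P Q) = ConvMap Cm (lC P) (𝟙 Q)) ∧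
      (∀ P Q : 𝒞ᵒᵖ ⥤ Type u,
        rC (_root_.Conv Cm P Q) ≫ aC P Q (yoneda.obj Cm.unit) = ConvMap Cm (𝟙 P) (rC Q)) ∧
      (rC (yoneda.obj Cm.unit) ≫ lC (yoneda.obj Cm.unit) = 𝟙 (yoneda.obj Cm.unit)) ∧
      -- (ii) the Yoneda embedding is strong monoidal
      (∃ μ : ∀ A B : 𝒞, _root_.Conv Cm (yoneda.obj A) (yoneda.obj B) ≅ yoneda.obj (Cm.ten A B),
        (∀ (A A' B B' : 𝒞) (f : A ⟶ A') (g : B ⟶ B'),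
          ConvMap Cm (yoneda.map f) (yoneda.map g) ≫ (μ A' B').hom
            = (μ A B).hom ≫ yoneda.map (Cm.tmap f g)) ∧
        (∀ A B C : 𝒞,
          aC (yoneda.obj A) (yoneda.obj B) (yoneda.obj C) ≫
              ConvMap Cm (𝟙 (yoneda.obj A)) (μ B C).hom ≫ (μ A (Cm.ten B C)).hom
            = ConvMap Cm (μ A B).hom (𝟙 (yoneda.obj C)) ≫ (μ (Cm.ten A B) C).hom ≫
                yoneda.map (Cm.a A B C)) ∧
        (∀ A : 𝒞, (μ Cm.unit A).hom ≫ yoneda.map (Cm.l A) = lC (yoneda.obj A)) ∧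
        (∀ A : 𝒞, rC (yoneda.obj A) ≫ (μ A Cm.unit).hom = yoneda.map (Cm.r A))) ∧
      -- (iii) the structure is left closed, with internal hom given by the end formula
      (∀ N : 𝒞ᵒᵖ ⥤ Type u, ∃ G : (𝒞ᵒᵖ ⥤ Type u) ⥤ (𝒞ᵒᵖ ⥤ Type u),
        (∀ K : 𝒞ᵒᵖ ⥤ Type u, G.obj K = ConvHomObj Cm N K) ∧
        Nonempty (ConvLeft Cm N ⊣ G)) := by
  refine ⟨ConvAssoc Cm, ConvLUnitor Cm, ConvRUnitor Cm,
    ?_, ?_, ?_, ?_, ?_, ?_, ?_, ?_, ⟨yMu Cm, ?_, ?_, ?_, ?_⟩,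
    fun N => ⟨ConvHomFunctor Cm N, fun K => rfl, ⟨convAdj Cm N⟩⟩⟩
  · -- naturality of the associator in P, Q, R
    intro P P' Q Q' R R' α β γ
    ext C q
    induction q using Quot.ind with
    | _ x =>
      obtain ⟨X, B, h, mq, rr⟩ := x
      induction mq using Quot.ind with
      | _ y => rfl
  · -- naturality of the left unitor
    intro P P' α
    ext C q
    induction q using Quot.ind with
    | _ x =>
      obtain ⟨A, B, h, u, p⟩ := x
      exact (NatTrans.naturality_apply α (h ≫ Cm.tmap u (𝟙 B) ≫ Cm.l B).op p).symm
  · -- naturality of the right unitor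
    intro P P' α
    ext C p
    rfl
  · -- M1
    intro P Q R S
    ext C q
    induction q using Quot.ind with
    | _ x =>
      obtain ⟨X, D, h, mq1, s⟩ := x
      induction mq1 using Quot.ind with
      | _ y =>
        obtain ⟨Y, Cc, k, mq2, rr⟩ := y
        induction mq2 using Quot.ind with
        | _ z =>
          obtain ⟨A, B, m, p, q⟩ := z
          refine conv_sound Cm (𝟙 A) (Cm.a B Cc D) ?_ (by simp) ?_
          · dsimp only
            simp only [Category.assoc]
            rw [tmapL Cm k (Cm.tmap m (𝟙 Cc) ≫ Cm.a A B Cc) D,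
              tmapL Cm (Cm.tmap m (𝟙 Cc)) (Cm.a A B Cc) D]
            simp only [Category.assoc]
            rw [Cm.M1 A B Cc D]
            slice_rhs 3 4 => rw [Cm.a_natural m (𝟙 Cc) (𝟙 D)]
            rw [Cm.tmap_id]
            simp only [Category.assoc]
          · dsimp only
            apply congrArg (Quot.mk _)
            simp [Cm.tmap_id]
            rfl
  · -- M2
    intro P Q
    ext C q
    induction q using Quot.ind with
    | _ x =>
      obtain ⟨A, B, h, p, q⟩ := x
      refine conv_sound Cm (𝟙 A) (Cm.l B) ?_ (by simp) ?_
      · dsimp only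
        simp only [Category.assoc]
        rw [Cm.M2 A B]
        simp
      · dsimp only
        show Q.map (𝟙 (Cm.ten Cm.unit B) ≫ Cm.tmap (𝟙 Cm.unit) (𝟙 B) ≫ Cm.l B).op
            (NatTrans.app (𝟙 Q) (Opposite.op B) q) = Q.map (Cm.l B).op q
        rw [show (𝟙 (Cm.ten Cm.unit B) ≫ Cm.tmap (𝟙 Cm.unit) (𝟙 B) ≫ Cm.l B) = Cm.l B from by
          simp [Cm.tmap_id]]
        rfl
  · -- M3
    intro P Q
    ext C q
    induction q using Quot.ind with
    | _ x =>
      obtain ⟨X, B, h, mq, q⟩ := x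
      induction mq using Quot.ind with
      | _ y =>
        obtain ⟨U, A, k, u, p⟩ := y
        refine (conv_sound Cm (k ≫ Cm.tmap u (𝟙 A) ≫ Cm.l A) (𝟙 B) ?_ rfl (by simp)).symm
        · dsimp only
          simp only [Category.comp_id, Category.assoc]
          rw [tmapL Cm k (Cm.tmap u (𝟙 A) ≫ Cm.l A) B,
            tmapL Cm (Cm.tmap u (𝟙 A)) (Cm.l A) B]
          rw [← Cm.M3 A B]
          simp only [Category.assoc]
          slice_rhs 3 4 => rw [Cm.a_natural u (𝟙 A) (𝟙 B)]
          rw [Cm.tmap_id]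
          simp only [Category.assoc]
          rfl
  · -- M4
    intro P Q
    ext C q
    induction q using Quot.ind with
    | _ x =>
      obtain ⟨A, B, h, p, q⟩ := x
      refine (conv_sound Cm (𝟙 A) (Cm.r B) ?_ (by simp) ?_).symm
      · dsimp only
        slice_lhs 1 2 => rw [← Cm.r_natural h]
        slice_lhs 2 3 => rw [Cm.M4 A B]
      · dsimp only
        apply congrArg (Quot.mk _)
        simp
        rfl
  · -- M5
    ext C u
    show (Cm.r C.unop ≫ Cm.tmap u (𝟙 Cm.unit) ≫ Cm.l Cm.unit) ≫ 𝟙 Cm.unit = u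
    rw [Category.comp_id, ← Category.assoc, ← Cm.r_natural u, Category.assoc, Cm.M5,
      Category.comp_id]
  · -- μ natural
    intro A A' B B' f g
    ext C q
    induction q using Quot.ind with
    | _ x =>
      obtain ⟨X, Y, h, k, m⟩ := x
      show h ≫ Cm.tmap (k ≫ f) (m ≫ g) = (h ≫ Cm.tmap k m) ≫ Cm.tmap f g
      rw [Cm.tmap_comp, Category.assoc]
  · -- μ compatible with the associators
    intro A B C
    ext Z q
    induction q using Quot.ind with
    | _ x =>
      obtain ⟨X, Y, h, mq, c⟩ := x
      induction mq using Quot.ind with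
      | _ y =>
        obtain ⟨X₁, Y₁, k, f, g⟩ := y
        show (h ≫ Cm.tmap k (𝟙 Y) ≫ Cm.a X₁ Y₁ Y) ≫ Cm.tmap f (𝟙 (Cm.ten Y₁ Y) ≫ Cm.tmap g c)
          = (h ≫ Cm.tmap (k ≫ Cm.tmap f g) c) ≫ Cm.a A B C
        rw [show Cm.tmap (k ≫ Cm.tmap f g) c
            = Cm.tmap k (𝟙 Y) ≫ Cm.tmap (Cm.tmap f g) c from by rw [← Cm.tmap_comp]; simp]
        simp only [Category.id_comp, Category.assoc]
        slice_rhs 3 4 => rw [Cm.a_natural f g c]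
  · -- μ compatible with the left unitors
    intro A
    ext C q
    induction q using Quot.ind with
    | _ x =>
      obtain ⟨X, Y, h, u, k⟩ := x
      show (h ≫ Cm.tmap u k) ≫ Cm.l A = (h ≫ Cm.tmap u (𝟙 Y) ≫ Cm.l Y) ≫ k
      rw [tmapLR Cm u k]
      simp only [Category.assoc]
      rw [Cm.l_natural k]
  · -- μ compatible with the right unitors
    intro A
    ext C k
    show Cm.r C.unop ≫ Cm.tmap k (𝟙 Cm.unit) = k ≫ Cm.r A
    exact (Cm.r_natural k).symm

end DayConvolution
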